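/- For a smooth positive function ρ, 2ρ ∇(Δ√ρ/√ρ) = div(2√ρ ∇²√ρ − 2 ∇√ρ ⊗ ∇√ρ) pointwise. -/

import Mathlib

open scoped BigOperators

/-- Partial derivative in direction `i` of a scalar function on `ℝ³` (modeling `𝕋³`). -/
noncomputable def pd (i : Fin 3) (f : (Fin 3 → ℝ) → ℝ) (x : Fin 3 → ℝ) : ℝ :=
  fderiv ℝ f x (Pi.single i 1)

section helpers

variable {f g : (Fin 3 → ℝ) → ℝ} {i j : Fin 3} {x : Fin 3 → ℝ}

lemma aux_one_le : (1 : WithTop ℕ∞) ≤ ((⊤ : ℕ∞) : WithTop ℕ∞) := by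
  exact_mod_cast (le_top : (1 : ℕ∞) ≤ ⊤)

lemma aux_ne_zero : ((⊤ : ℕ∞) : WithTop ℕ∞) ≠ 0 := by
  simp

lemma aux_succ_le : ((⊤ : ℕ∞) : WithTop ℕ∞) + 1 ≤ ((⊤ : ℕ∞) : WithTop ℕ∞) := by
  exact_mod_cast (le_top : ((⊤ : ℕ∞) + 1) ≤ ⊤)

lemma contDiff_pd (i : Fin 3) (hf : ContDiff ℝ (⊤ : ℕ∞) f) :
    ContDiff ℝ (⊤ : ℕ∞) (pd i f) := by
  exact (hf.fderiv_right aux_succ_le).clm_apply contDiff_const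

lemma pd_mul (hf : ContDiff ℝ (⊤ : ℕ∞) f) (hg : ContDiff ℝ (⊤ : ℕ∞) g) :
    pd i (fun y => f y * g y) x = pd i f x * g x + f x * pd i g x := by
  unfold pd
  rw [fderiv_fun_mul ((hf.differentiable aux_ne_zero).differentiableAt)
      ((hg.differentiable aux_ne_zero).differentiableAt)]
  simp only [ContinuousLinearMap.add_apply, ContinuousLinearMap.smul_apply, smul_eq_mul]
  ring

lemma pd_sub (hf : ContDiff ℝ (⊤ : ℕ∞) f) (hg : ContDiff ℝ (⊤ : ℕ∞) g) :
    pd i (fun y => f y - g y) x = pd i f x - pd i g x := by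
  unfold pd
  rw [fderiv_fun_sub ((hf.differentiable aux_ne_zero).differentiableAt)
      ((hg.differentiable aux_ne_zero).differentiableAt)]
  simp

lemma pd_const_mul (c : ℝ) (hf : ContDiff ℝ (⊤ : ℕ∞) f) :
    pd i (fun y => c * f y) x = c * pd i f x := by
  unfold pd
  rw [fderiv_const_mul ((hf.differentiable aux_ne_zero).differentiableAt)]
  simp

lemma pd_sum {A : Fin 3 → (Fin 3 → ℝ) → ℝ} (hA : ∀ j, ContDiff ℝ (⊤ : ℕ∞) (A j)) :
    pd i (fun y => ∑ j, A j y) x = ∑ j, pd i (A j) x := by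
  unfold pd
  rw [fderiv_fun_sum (fun j _ => ((hA j).differentiable aux_ne_zero).differentiableAt)]
  simp

lemma pd_eq_snd (hf : ContDiff ℝ (⊤ : ℕ∞) f) :
    pd i (pd j f) x = fderiv ℝ (fderiv ℝ f) x (Pi.single i 1) (Pi.single j 1) := by
  unfold pd
  rw [fderiv_clm_apply
      (((hf.fderiv_right aux_succ_le).differentiable aux_ne_zero).differentiableAt)
      (differentiableAt_const _)]
  simp

lemma pd_comm (hf : ContDiff ℝ (⊤ : ℕ∞) f) :
    pd i (pd j f) x = pd j (pd i f) x := by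
  rw [pd_eq_snd hf, pd_eq_snd hf]
  exact second_derivative_symmetric
    (fun y => ((hf.differentiable aux_ne_zero) y).hasFDerivAt)
    (((hf.fderiv_right aux_succ_le).differentiable aux_ne_zero).differentiableAt.hasFDerivAt) _ _

end helpers

/-- For smooth positive `ρ`:
`2 ρ ∇(Δ√ρ/√ρ) = div(2 √ρ ∇²√ρ − 2 ∇√ρ ⊗ ∇√ρ)` pointwise (componentwise in `i`),
where `div` acts row-wise on matrix fields. -/
theorem bohm_divergence_form (ρ : (Fin 3 → ℝ) → ℝ)
    (hρ : ContDiff ℝ (⊤ : ℕ∞) ρ) (hpos : ∀ x, 0 < ρ x) :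
    ∀ (x : Fin 3 → ℝ) (i : Fin 3),
      2 * ρ x * pd i (fun y =>
          (∑ j, pd j (pd j (fun z => Real.sqrt (ρ z))) y) / Real.sqrt (ρ y)) x
        = ∑ j, pd j (fun y =>
            2 * Real.sqrt (ρ y) * pd i (pd j (fun z => Real.sqrt (ρ z))) y
              - 2 * pd i (fun z => Real.sqrt (ρ z)) y * pd j (fun z => Real.sqrt (ρ z)) y) x := by
  intro x i
  set s : (Fin 3 → ℝ) → ℝ := fun z => Real.sqrt (ρ z) with hs_def
  have hs : ContDiff ℝ (⊤ : ℕ∞) s := by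
    rw [contDiff_iff_contDiffAt]
    intro y
    exact (Real.contDiffAt_sqrt (ne_of_gt (hpos y))).comp y hρ.contDiffAt
  have hspos : ∀ y, 0 < s y := fun y => Real.sqrt_pos.2 (hpos y)
  have hsx : s x ≠ 0 := ne_of_gt (hspos x)
  -- smoothness of derived fields
  have hs1 : ∀ j : Fin 3, ContDiff ℝ (⊤ : ℕ∞) (pd j s) := fun j => contDiff_pd j hs
  have hs2 : ∀ j k : Fin 3, ContDiff ℝ (⊤ : ℕ∞) (pd j (pd k s)) :=
    fun j k => contDiff_pd j (hs1 k)
  have hs3 : ∀ j k l : Fin 3, ContDiff ℝ (⊤ : ℕ∞) (pd j (pd k (pd l s))) :=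
    fun j k l => contDiff_pd j (hs2 k l)
  -- the Laplacian of s
  set N : (Fin 3 → ℝ) → ℝ := fun y => ∑ j, pd j (pd j s) y with hN_def
  have hN : ContDiff ℝ (⊤ : ℕ∞) N := by
    apply ContDiff.sum
    intro j _
    exact hs2 j j
  -- quotient
  set q : (Fin 3 → ℝ) → ℝ := fun y => N y / s y with hq_def
  have hq : ContDiff ℝ (⊤ : ℕ∞) q := hN.div hs (fun y => ne_of_gt (hspos y))
  have hNq : N = fun y => q y * s y := by
    funext y
    rw [hq_def]
    exact (div_mul_cancel₀ _ (ne_of_gt (hspos y))).symm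
  -- pd i N via the product rule on N = q * s
  have hpdN : pd i N x = pd i q x * s x + q x * pd i s x := by
    conv_lhs => rw [hNq]
    exact pd_mul hq hs
  have hpdNsum : pd i N x = ∑ j, pd i (pd j (pd j s)) x := by
    rw [hN_def]
    exact pd_sum (fun j => hs2 j j)
  -- RHS term computation
  have hterm : ∀ j : Fin 3,
      pd j (fun y => 2 * s y * pd i (pd j s) y - 2 * pd i s y * pd j s y) x
        = 2 * s x * pd i (pd j (pd j s)) x - 2 * pd i s x * pd j (pd j s) x := by
    intro j
    have e1 : pd j (fun y => 2 * s y * pd i (pd j s) y) x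
        = pd j (fun y => 2 * s y) x * pd i (pd j s) x
          + (2 * s x) * pd j (pd i (pd j s)) x :=
      pd_mul (contDiff_const.mul hs) (hs2 i j)
    have e2 : pd j (fun y => 2 * pd i s y * pd j s y) x
        = pd j (fun y => 2 * pd i s y) x * pd j s x
          + (2 * pd i s x) * pd j (pd j s) x :=
      pd_mul (contDiff_const.mul (hs1 i)) (hs1 j)
    have e3 : pd j (fun y => 2 * s y) x = 2 * pd j s x := pd_const_mul 2 hs
    have e4 : pd j (fun y => 2 * pd i s y) x = 2 * pd j (pd i s) x :=
      pd_const_mul 2 (hs1 i)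
    have e5 : pd j (pd i (pd j s)) x = pd i (pd j (pd j s)) x := pd_comm (hs1 j)
    have e6 : pd j (pd i s) x = pd i (pd j s) x := pd_comm hs
    rw [pd_sub (contDiff_const.mul hs |>.mul (hs2 i j))
        (contDiff_const.mul (hs1 i) |>.mul (hs1 j)), e1, e2, e3, e4, e5, e6]
    ring
  -- assemble
  have hρx : ρ x = s x ^ 2 := (Real.sq_sqrt (hpos x).le).symm
  calc 2 * ρ x * pd i q x
      = 2 * s x ^ 2 * pd i q x := by rw [hρx]
    _ = 2 * s x * (pd i q x * s x + q x * pd i s x) - 2 * pd i s x * N x := by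
        rw [hq_def]
        field_simp
        ring
    _ = 2 * s x * pd i N x - 2 * pd i s x * N x := by rw [hpdN]
    _ = ∑ j, (2 * s x * pd i (pd j (pd j s)) x - 2 * pd i s x * pd j (pd j s) x) := by
        rw [hpdNsum, hN_def, Finset.mul_sum, Finset.mul_sum, ← Finset.sum_sub_distrib]
    _ = ∑ j, pd j (fun y => 2 * s y * pd i (pd j s) y - 2 * pd i s y * pd j s y) x := by
        refine Finset.sum_congr rfl fun j _ => (hterm j).symm
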